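/- Let p = 2^k − 1 be a Mersenne prime, G = ⟨g⟩ cyclic of order 2p, and l odd with 0 < l < p. Then the element α = Σ_{i=1}^{k} g^{2^i l} of Z_2[G] is a Smarandache idempotent: there exists β ∈ Z_2[G] \ {0, 1, α} with β^2 = α and αβ = β. -/

import Mathlib

open Finset

theorem stmt_10 (k p l : ℕ) (hk : Nat.Prime k) (hp : p = 2 ^ k - 1)
    (hpp : Nat.Prime p) (hl : Odd l) (hl0 : 0 < l) (hlp : l < p)
    (g : MonoidAlgebra (ZMod 2) (Multiplicative (ZMod (2 * p))))
    (hg : g = MonoidAlgebra.of (ZMod 2) (Multiplicative (ZMod (2 * p)))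
      (Multiplicative.ofAdd (1 : ZMod (2 * p))))
    (α : MonoidAlgebra (ZMod 2) (Multiplicative (ZMod (2 * p))))
    (hα : α = ∑ i ∈ Finset.Icc 1 k, g ^ (2 ^ i * l)) :
    ∃ β : MonoidAlgebra (ZMod 2) (Multiplicative (ZMod (2 * p))),
      β ≠ 0 ∧ β ≠ 1 ∧ β ≠ α ∧ β ^ 2 = α ∧ α * β = β := by
  classical
  haveI : Fact (Nat.Prime p) := ⟨hpp⟩
  have hk2 : 2 ≤ k := hk.two_le
  have hk0 : 0 < k := by omega
  have h4 : 4 ≤ 2 ^ k := by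
    calc (4:ℕ) = 2 ^ 2 := rfl
    _ ≤ 2 ^ k := Nat.pow_le_pow_right (by norm_num) hk2
  have hp1 : 2 ^ k = p + 1 := by omega
  have hp3 : 3 ≤ p := by omega
  have hp0 : 0 < p := by omega
  have h2dvd : 2 ∣ 2 ^ k := dvd_pow_self 2 (by omega)
  have hpodd : p % 2 = 1 := by omega
  have hcop : Nat.Coprime 2 p := by
    refine (Nat.prime_two.coprime_iff_not_dvd).mpr ?_
    intro h; omega
  -- order of 2 mod p is k
  have h2k1 : (2:ℕ) ^ k ≡ 1 [MOD p] := by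
    show 2 ^ k % p = 1 % p
    rw [hp1]
    exact Nat.add_mod_left p 1
  have h2k : (2 : ZMod p) ^ k = 1 := by
    have := (ZMod.natCast_eq_natCast_iff (2^k) 1 p).mpr h2k1
    push_cast at this
    simpa using this
  have hord : orderOf (2 : ZMod p) = k := by
    have hdvd : orderOf (2 : ZMod p) ∣ k := orderOf_dvd_of_pow_eq_one h2k
    rcases (Nat.Prime.eq_one_or_self_of_dvd hk _ hdvd) with h1 | h
    · exfalso
      have : (2 : ZMod p) = 1 := orderOf_eq_one_iff.mp h1
      have h21 : ((2:ℕ) : ZMod p) = ((1:ℕ) : ZMod p) := by push_cast; simpa using this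
      have := (ZMod.natCast_eq_natCast_iff 2 1 p).mp h21
      have h2p : 2 % p = 1 % p := this
      have e1 : 2 % p = 2 := Nat.mod_eq_of_lt (by omega)
      have e2 : 1 % p = 1 := Nat.mod_eq_of_lt (by omega)
      omega
    · exact h
  have hkdvd : ∀ j : ℕ, (2 : ZMod p) ^ j = 1 → k ∣ j := by
    intro j hj
    rw [← hord]
    exact orderOf_dvd_of_pow_eq_one hj
  have hlne : (l : ZMod p) ≠ 0 := by
    intro h
    have := (ZMod.natCast_eq_zero_iff l p).mp h
    have := Nat.le_of_dvd hl0 this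
    omega
  -- basic facts about powers of g
  have hgpow : ∀ n : ℕ, g ^ n
      = MonoidAlgebra.single (Multiplicative.ofAdd ((n : ZMod (2*p)))) (1 : ZMod 2) := by
    intro n
    rw [hg, ← map_pow, MonoidAlgebra.of_apply]
    congr 1
    rw [← ofAdd_nsmul]
    congr 1
    simp [nsmul_eq_mul]
  have hgeq : ∀ a b : ℕ, a % 2 = b % 2 → a ≡ b [MOD p] → g ^ a = g ^ b := by
    intro a b h2 hpm
    rw [hgpow, hgpow]
    congr 2
    exact (ZMod.natCast_eq_natCast_iff a b (2*p)).mpr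
      ((Nat.modEq_and_modEq_iff_modEq_mul hcop).mp ⟨h2, hpm⟩)
  have hxx : ∀ c : ℕ, g ^ c + g ^ c = 0 := by
    intro c
    rw [hgpow, ← MonoidAlgebra.single_add]
    have h11 : (1 : ZMod 2) + 1 = 0 := by decide
    rw [h11]
    exact MonoidAlgebra.single_zero _
  -- the sequence T
  set T : ℕ → ℕ := fun j =>
    if (2 ^ j * l) % p % 2 = 1 then (2 ^ j * l) % p else (2 ^ j * l) % p + p with hTdef
  have hTmod : ∀ j, T j ≡ 2 ^ j * l [MOD p] := by
    intro j
    show T j % p = (2 ^ j * l) % p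
    simp only [hTdef]
    split
    · exact Nat.mod_mod_of_dvd _ dvd_rfl
    · rw [Nat.add_mod_right]; exact Nat.mod_mod_of_dvd _ dvd_rfl
  have hTodd : ∀ j, T j % 2 = 1 := by
    intro j
    simp only [hTdef]
    split
    · assumption
    · omega
  have haeven : ∀ i : ℕ, (2 ^ (i+1) * l) % 2 = 0 := by
    intro i
    have : 2 ∣ 2 ^ (i+1) * l := Dvd.dvd.mul_right (dvd_pow_self 2 (by omega)) l
    omega
  have hpowmod : ∀ x : ℕ, (2:ℕ) ^ (x % k) ≡ 2 ^ x [MOD p] := by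
    intro x
    conv_rhs => rw [← Nat.div_add_mod x k]
    rw [pow_add, pow_mul]
    calc (2:ℕ) ^ (x % k) = 1 ^ (x / k) * 2 ^ (x % k) := by ring
    _ ≡ (2 ^ k) ^ (x / k) * 2 ^ (x % k) [MOD p] :=
        Nat.ModEq.mul_right _ (Nat.ModEq.pow _ h2k1.symm)
  have hTc : ∀ x : ℕ, T (x % k) ≡ 2 ^ x * l [MOD p] := by
    intro x
    exact (hTmod _).trans ((hpowmod x).mul_right l)
  -- β
  set β : MonoidAlgebra (ZMod 2) (Multiplicative (ZMod (2 * p))) :=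
    ∑ j ∈ Finset.range k, g ^ (T j) with hβ
  -- α as a sum over range k
  have hα' : α = ∑ i ∈ Finset.range k, g ^ (2 ^ (i+1) * l) := by
    rw [hα]
    refine Finset.sum_nbij' (fun i => i - 1) (fun i => i + 1) ?_ ?_ ?_ ?_ ?_
    · intro a ha; rw [Finset.mem_Icc] at ha; rw [Finset.mem_range]; omega
    · intro a ha; rw [Finset.mem_range] at ha; rw [Finset.mem_Icc]; omega
    · intro a ha; rw [Finset.mem_Icc] at ha; omega
    · intro a ha; omega
    · intro a ha
      rw [Finset.mem_Icc] at ha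
      have : a - 1 + 1 = a := by omega
      rw [this]
  -- coefficient of β at ofAdd (T 0)
  set x₀ : Multiplicative (ZMod (2*p)) := Multiplicative.ofAdd ((T 0 : ZMod (2*p))) with hx₀
  have hofAdd_inj : Function.Injective
      (Multiplicative.ofAdd : ZMod (2*p) → Multiplicative (ZMod (2*p))) := fun a b h => h
  have hβx₀ : β.coeff x₀ = 1 := by
    rw [hβ, MonoidAlgebra.coeff_sum, Finset.sum_apply']
    rw [Finset.sum_eq_single_of_mem 0 (Finset.mem_range.mpr hk0)]
    · rw [hgpow, MonoidAlgebra.single_apply, if_pos rfl]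
    · intro j hj hj0
      rw [Finset.mem_range] at hj
      rw [hgpow, MonoidAlgebra.single_apply, if_neg]
      intro hEq
      have hcast : ((T j : ℕ) : ZMod (2*p)) = ((T 0 : ℕ) : ZMod (2*p)) := hofAdd_inj hEq
      have hm2p := (ZMod.natCast_eq_natCast_iff _ _ _).mp hcast
      have hmp : T j ≡ T 0 [MOD p] := Nat.ModEq.of_mul_left 2 hm2p
      have h1 : (2:ℕ) ^ j * l ≡ 2 ^ 0 * l [MOD p] := ((hTmod j).symm.trans hmp).trans (hTmod 0)
      have h2 : ((2:ℕ)^j * l : ℕ) = ((2^0 * l : ℕ) : ZMod p) :=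
        (ZMod.natCast_eq_natCast_iff _ _ _).mpr h1
      push_cast at h2
      have h3 : (2 : ZMod p) ^ j * l = 1 * (l : ZMod p) := by
        rw [one_mul]; simpa using h2
      have h4 : (2 : ZMod p) ^ j = 1 := mul_right_cancel₀ hlne h3
      have hd := hkdvd j h4
      have := Nat.le_of_dvd (by omega) hd
      omega
  -- nonzero, not one, not α
  refine ⟨β, ?_, ?_, ?_, ?_, ?_⟩
  · intro h
    rw [h] at hβx₀
    simp at hβx₀
  · intro h
    rw [h] at hβx₀
    rw [MonoidAlgebra.one_def, MonoidAlgebra.single_apply, if_neg] at hβx₀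
    · exact one_ne_zero hβx₀.symm
    · intro hEq
      have h0' : (0 : ZMod (2*p)) = ((T 0 : ℕ) : ZMod (2*p)) := by
        rw [hx₀] at hEq
        simpa using congrArg Multiplicative.toAdd hEq
      have h0 := (ZMod.natCast_eq_natCast_iff 0 (T 0) (2*p)).mp (by exact_mod_cast h0')
      have hdvd : (2*p) ∣ T 0 := Nat.modEq_zero_iff_dvd.mp h0.symm
      have h2 : 2 ∣ T 0 := dvd_trans (Dvd.intro p rfl) hdvd
      have hT2 : T 0 % 2 = 1 := hTodd 0
      omega
  · intro h
    rw [h, hα', MonoidAlgebra.coeff_sum, Finset.sum_apply'] at hβx₀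
    have : ∀ i ∈ Finset.range k, (g ^ (2 ^ (i+1) * l)).coeff x₀ = 0 := by
      intro i hi
      rw [hgpow, MonoidAlgebra.single_apply, if_neg]
      intro hEq
      have hcast : ((2^(i+1)*l : ℕ) : ZMod (2*p)) = ((T 0 : ℕ) : ZMod (2*p)) := hofAdd_inj hEq
      have hm := (ZMod.natCast_eq_natCast_iff _ _ _).mp hcast
      have hm2 : (2^(i+1)*l) ≡ T 0 [MOD 2] := Nat.ModEq.of_mul_right p hm
      have : (2^(i+1)*l) % 2 = T 0 % 2 := hm2
      have he := haeven i
      have ho := hTodd 0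
      omega
    rw [Finset.sum_congr rfl this] at hβx₀
    simp at hβx₀
  -- β ^ 2 = α
  · haveI : CharP (MonoidAlgebra (ZMod 2) (Multiplicative (ZMod (2*p)))) 2 :=
      charP_of_injective_ringHom
        (f := MonoidAlgebra.singleOneRingHom (R := ZMod 2) (M := Multiplicative (ZMod (2*p))))
        (fun a b hab => by
          simpa using (MonoidAlgebra.single_right_injective (m := (1 : Multiplicative (ZMod (2*p)))) hab)) 2
    rw [hβ, hα', sum_pow_char]
    refine Finset.sum_congr rfl ?_
    intro j hj
    rw [← pow_mul]
    refine hgeq _ _ ?_ ?_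
    · have := hTodd j
      have := haeven j
      omega
    · have h1 : T j * 2 ≡ (2 ^ j * l) * 2 [MOD p] := (hTmod j).mul_right 2
      have h2 : (2 ^ j * l) * 2 = 2 ^ (j+1) * l := by ring
      rw [h2] at h1
      exact h1
  -- α * β = β
  · rw [hα', hβ, Finset.sum_mul_sum]
    have hterm : ∀ i j : ℕ, g ^ (2 ^ (i+1) * l) * g ^ (T j) = g ^ (2 ^ (i+1) * l + T j) := by
      intro i j; rw [← pow_add]
    simp only [hterm]
    rw [← Finset.sum_product']
    rw [← Finset.sum_filter_add_sum_filter_not (Finset.range k ×ˢ Finset.range k)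
      (fun q => q.2 = (q.1 + 1) % k)]
    have hmodlt : ∀ x : ℕ, x % k < k := fun x => Nat.mod_lt x hk0
    -- the sum over non-fixed pairs vanishes
    have hzero : (∑ q ∈ (Finset.range k ×ˢ Finset.range k).filter
        (fun q => ¬ q.2 = (q.1 + 1) % k), g ^ (2 ^ (q.1+1) * l + T q.2)) = 0 := by
      refine Finset.sum_involution
        (fun q _ => ((q.2 + (k-1)) % k, (q.1 + 1) % k)) ?_ ?_ ?_ ?_
      · -- f a + f (σ a) = 0
        intro q hq
        dsimp only
        have heq : g ^ (2 ^ (q.1+1) * l + T q.2)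
            = g ^ (2 ^ (((q.2 + (k-1)) % k)+1) * l + T ((q.1 + 1) % k)) := by
          refine hgeq _ _ ?_ ?_
          · have h1 := hTodd q.2
            have h2 := hTodd ((q.1+1) % k)
            have h3 := haeven q.1
            have h4 := haeven ((q.2 + (k-1)) % k)
            omega
          · -- mod p congruence
            have hA : (2:ℕ) ^ (((q.2 + (k-1)) % k)+1) * l ≡ 2 ^ q.2 * l [MOD p] := by
              have : (2:ℕ) ^ (((q.2 + (k-1)) % k)+1) = 2 ^ ((q.2 + (k-1)) % k) * 2 := by ring
              rw [this]
              have h5 : (2:ℕ) ^ ((q.2 + (k-1)) % k) * 2 ≡ 2 ^ (q.2 + (k-1)) * 2 [MOD p] :=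
                (hpowmod _).mul_right 2
              have h6 : (2:ℕ) ^ (q.2 + (k-1)) * 2 = 2 ^ (q.2 + k) := by
                rw [← pow_succ]
                congr 1
                omega
              rw [h6] at h5
              have h7 : (2:ℕ) ^ (q.2 + k) ≡ 2 ^ q.2 [MOD p] := by
                rw [pow_add]
                calc (2:ℕ) ^ q.2 * 2 ^ k ≡ 2 ^ q.2 * 1 [MOD p] := Nat.ModEq.mul_left _ h2k1
                _ = 2 ^ q.2 := by ring
              exact (h5.trans h7).mul_right l
            have hB : T ((q.1 + 1) % k) ≡ 2 ^ (q.1+1) * l [MOD p] := hTc _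
            calc 2 ^ (q.1+1) * l + T q.2
                ≡ 2 ^ (q.1+1) * l + 2 ^ q.2 * l [MOD p] := Nat.ModEq.add_left _ (hTmod q.2)
              _ = 2 ^ q.2 * l + 2 ^ (q.1+1) * l := by ring
              _ ≡ 2 ^ (((q.2 + (k-1)) % k)+1) * l + T ((q.1+1) % k) [MOD p] :=
                  Nat.ModEq.add hA.symm hB.symm
        rw [← heq]
        exact hxx _
      · -- σ a ≠ a
        intro q hq hf hEq
        rw [Finset.mem_filter] at hq
        have : (q.1 + 1) % k = q.2 := congrArg Prod.snd hEq
        exact hq.2 this.symm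
      · -- σ a ∈ s
        intro q hq
        rw [Finset.mem_filter, Finset.mem_product, Finset.mem_range, Finset.mem_range] at hq
        obtain ⟨⟨hq1, hq2⟩, hnf⟩ := hq
        rw [Finset.mem_filter, Finset.mem_product, Finset.mem_range, Finset.mem_range]
        refine ⟨⟨hmodlt _, hmodlt _⟩, ?_⟩
        intro hEq
        have h2 : ((q.2 + (k-1)) % k + 1) % k = (q.2 + (k-1) + 1) % k := Nat.mod_add_mod _ _ _
        have h3 : q.2 + (k-1) + 1 = q.2 + k := by omega
        have h4 : (q.2 + k) % k = q.2 := by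
          rw [Nat.add_mod_right]
          exact Nat.mod_eq_of_lt hq2
        have hEq' : (q.1 + 1) % k = ((q.2 + (k-1)) % k + 1) % k := hEq
        rw [h2, h3, h4] at hEq'
        exact hnf hEq'.symm
      · -- σ (σ a) = a
        intro q hq
        rw [Finset.mem_filter, Finset.mem_product, Finset.mem_range, Finset.mem_range] at hq
        dsimp only
        have h1 : ((q.1 + 1) % k + (k-1)) % k = q.1 := by
          rw [Nat.mod_add_mod]
          have : q.1 + 1 + (k-1) = q.1 + k := by omega
          rw [this, Nat.add_mod_right]
          exact Nat.mod_eq_of_lt hq.1.1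
        have h2 : ((q.2 + (k-1)) % k + 1) % k = q.2 := by
          rw [Nat.mod_add_mod]
          have : q.2 + (k-1) + 1 = q.2 + k := by omega
          rw [this, Nat.add_mod_right]
          exact Nat.mod_eq_of_lt hq.1.2
        exact Prod.ext h1 h2
    rw [hzero, add_zero]
    -- the sum over fixed pairs equals β
    refine Finset.sum_nbij' (fun q => (q.1 + 2) % k)
      (fun m => ((m + (k-2)) % k, ((m + (k-2)) % k + 1) % k)) ?_ ?_ ?_ ?_ ?_
    · intro q hq
      exact Finset.mem_range.mpr (hmodlt _)
    · intro m hm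
      rw [Finset.mem_filter, Finset.mem_product]
      exact ⟨⟨Finset.mem_range.mpr (hmodlt _), Finset.mem_range.mpr (hmodlt _)⟩, rfl⟩
    · intro q hq
      rw [Finset.mem_filter, Finset.mem_product, Finset.mem_range, Finset.mem_range] at hq
      have h1 : ((q.1 + 2) % k + (k-2)) % k = q.1 := by
        rw [Nat.mod_add_mod]
        have : q.1 + 2 + (k-2) = q.1 + k := by omega
        rw [this, Nat.add_mod_right]
        exact Nat.mod_eq_of_lt hq.1.1
      have h2 : (((q.1 + 2) % k + (k-2)) % k + 1) % k = q.2 := by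
        rw [h1, ← hq.2]
      exact Prod.ext h1 h2
    · intro m hm
      rw [Finset.mem_range] at hm
      dsimp only
      rw [Nat.mod_add_mod]
      have : m + (k-2) + 2 = m + k := by omega
      rw [this, Nat.add_mod_right]
      exact Nat.mod_eq_of_lt hm
    · intro q hq
      rw [Finset.mem_filter, Finset.mem_product, Finset.mem_range, Finset.mem_range] at hq
      have hfix : q.2 = (q.1 + 1) % k := hq.2
      refine hgeq _ _ ?_ ?_
      · have h1 := hTodd q.2
        have h2 := hTodd ((q.1+2) % k)
        have h3 := haeven q.1
        omega
      · have hB : T q.2 ≡ 2 ^ (q.1+1) * l [MOD p] := by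
          rw [hfix]; exact hTc _
        calc 2 ^ (q.1+1) * l + T q.2
            ≡ 2 ^ (q.1+1) * l + 2 ^ (q.1+1) * l [MOD p] := Nat.ModEq.add_left _ hB
          _ = 2 ^ (q.1+2) * l := by ring
          _ ≡ T ((q.1+2) % k) [MOD p] := (hTc _).symm
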